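/- (Lemma 3, penalized case pruning with margin β.) For m < n, suppose the changepoint vector τ satisfies L_m(z, τ) − β > L^opt_m(z) for all z ∈ R. Then L^opt_n(z) < L_n(z, τ) for all z ∈ R, i.e., τ is never an optimizer of the penalized loss on the length-n problem. -/

import Mathlib

/-- Segment mean of entries `s` through `e` of the sequence `x`. -/
noncomputable def segMean (x : ℕ → ℝ) (s e : ℕ) : ℝ :=
  (∑ i ∈ Finset.Icc s e, x i) / ((e - s + 1 : ℕ) : ℝ)

/-- Segment cost `C(x_{s:e}) = ∑_{i=s}^e (x_i - x̄_{s:e})²`. -/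
noncomputable def segCost (x : ℕ → ℝ) (s e : ℕ) : ℝ :=
  ∑ i ∈ Finset.Icc s e, (x i - segMean x s e) ^ 2

/-- The parametrized sequence `x(z) = a + b z`. -/
def paramSeq (a b : ℕ → ℝ) (z : ℝ) : ℕ → ℝ := fun i => a i + b i * z

/-- The segment boundaries `0 = τ₀ < τ₁ < ... < τ_k < τ_{k+1} = n` associated with a
changepoint vector `τ = (τ₁, ..., τ_k)`. -/
def bounds (n : ℕ) {k : ℕ} (τ : Fin k → ℕ) : Fin (k + 2) → ℕ :=
  Fin.snoc (Fin.cons 0 τ) n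

/-- `τ` is a valid `k`-dimensional changepoint vector for a length-`n` sequence:
strictly increasing with `1 ≤ τ_i ≤ n - 1`. -/
def validCP (n : ℕ) {k : ℕ} (τ : Fin k → ℕ) : Prop :=
  StrictMono τ ∧ ∀ i, 1 ≤ τ i ∧ τ i < n

/-- The segmentation loss `L_{k,n}(x, τ) = ∑_{κ=1}^{k+1} C(x_{τ_{κ-1}+1 : τ_κ})`. -/
noncomputable def cpLoss (x : ℕ → ℝ) (n : ℕ) {k : ℕ} (τ : Fin k → ℕ) : ℝ :=
  ∑ κ : Fin (k + 1), segCost x (bounds n τ κ.castSucc + 1) (bounds n τ κ.succ)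

/-- The optimal loss `L^opt_{k,n}(x) = min_{τ ∈ T_{k,n}} L_{k,n}(x, τ)`. -/
noncomputable def optLoss (x : ℕ → ℝ) (k n : ℕ) : ℝ :=
  sInf {r : ℝ | ∃ τ : Fin k → ℕ, validCP n τ ∧ r = cpLoss x n τ}

/-- The penalized loss `L_n(x, τ) = ∑_κ C(x_{τ_{κ-1}+1:τ_κ}) + β·dim(τ)`. -/
noncomputable def penLoss (x : ℕ → ℝ) (β : ℝ) (n : ℕ) {k : ℕ} (τ : Fin k → ℕ) : ℝ :=
  cpLoss x n τ + β * k

/-- The penalized optimal loss `L^opt_n(x) = min_{τ ∈ T_n} L_n(x, τ)` over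
changepoint vectors of any dimension. -/
noncomputable def optPenLoss (x : ℕ → ℝ) (β : ℝ) (n : ℕ) : ℝ :=
  sInf {r : ℝ | ∃ (k : ℕ) (τ : Fin k → ℕ), validCP n τ ∧ r = penLoss x β n τ}

/- ----------------- auxiliary lemmas ----------------- -/

lemma segCost_nonneg (x : ℕ → ℝ) (s e : ℕ) : 0 ≤ segCost x s e :=
  Finset.sum_nonneg fun _ _ => sq_nonneg _

/-- The segment mean minimizes the sum of squared deviations. -/
lemma segCost_le (x : ℕ → ℝ) (s e : ℕ) (c : ℝ) :
    segCost x s e ≤ ∑ i ∈ Finset.Icc s e, (x i - c) ^ 2 := by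
  rcases le_or_gt s e with h | h
  · set μ := segMean x s e with hμdef
    have hN : ((e - s + 1 : ℕ) : ℝ) ≠ 0 := by positivity
    have hcardn : (Finset.Icc s e).card = e - s + 1 := by rw [Nat.card_Icc]; omega
    have hsum : ∑ i ∈ Finset.Icc s e, (x i - μ) = 0 := by
      rw [Finset.sum_sub_distrib, Finset.sum_const, hcardn, nsmul_eq_mul, hμdef, segMean,
        mul_div_cancel₀ _ hN, sub_self]
    have hconst : ((Finset.Icc s e).card : ℝ) * (μ - c) ^ 2
        = ∑ _i ∈ Finset.Icc s e, (μ - c) ^ 2 := by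
      rw [Finset.sum_const, nsmul_eq_mul]
    have key : ∑ i ∈ Finset.Icc s e, (x i - c) ^ 2
        = segCost x s e + 2 * (μ - c) * ∑ i ∈ Finset.Icc s e, (x i - μ)
          + ((Finset.Icc s e).card : ℝ) * (μ - c) ^ 2 := by
      rw [segCost, Finset.mul_sum, hconst, ← Finset.sum_add_distrib, ← Finset.sum_add_distrib]
      exact Finset.sum_congr rfl fun i _ => by ring
    have hpos : 0 ≤ ((Finset.Icc s e).card : ℝ) * (μ - c) ^ 2 := by positivity
    rw [key, hsum]
    linarith
  · rw [Finset.Icc_eq_empty (by omega), segCost, Finset.Icc_eq_empty (by omega)]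
    simp

/-- Splitting a segment never increases the cost. -/
lemma segCost_split (x : ℕ → ℝ) (s m e : ℕ) (h1 : s ≤ m) (h2 : m ≤ e) :
    segCost x (s + 1) m + segCost x (m + 1) e ≤ segCost x (s + 1) e := by
  have hunion : Finset.Ioc s m ∪ Finset.Ioc m e = Finset.Ioc s e :=
    Finset.Ioc_union_Ioc_eq_Ioc h1 h2
  have hdisj : Disjoint (Finset.Ioc s m) (Finset.Ioc m e) := by
    rw [Finset.disjoint_left]; intro i hi hi'; simp at hi hi'; omega
  have h3 := segCost_le x (s + 1) m (segMean x (s + 1) e)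
  have h4 := segCost_le x (m + 1) e (segMean x (s + 1) e)
  have h5 : segCost x (s + 1) e
      = ∑ i ∈ Finset.Icc (s + 1) m, (x i - segMean x (s + 1) e) ^ 2
        + ∑ i ∈ Finset.Icc (m + 1) e, (x i - segMean x (s + 1) e) ^ 2 := by
    rw [segCost, Finset.Icc_add_one_left_eq_Ioc, Finset.Icc_add_one_left_eq_Ioc, Finset.Icc_add_one_left_eq_Ioc, ← hunion,
      Finset.sum_union hdisj]
  linarith

/-- Uniform reformulation of `cpLoss`, isolating the final segment. -/
lemma cpLoss_eq (x : ℕ → ℝ) (n : ℕ) {k : ℕ} (τ : Fin k → ℕ) :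
    cpLoss x n τ
      = (∑ j : Fin k, segCost x ((Fin.cons 0 τ : Fin (k+1) → ℕ) j.castSucc + 1)
          ((Fin.cons 0 τ : Fin (k+1) → ℕ) j.succ))
        + segCost x ((Fin.cons 0 τ : Fin (k+1) → ℕ) (Fin.last k) + 1) n := by
  rw [cpLoss, Fin.sum_univ_castSucc]
  congr 1
  · refine Finset.sum_congr rfl fun j _ => ?_
    rw [Fin.succ_castSucc, bounds, Fin.snoc_castSucc, Fin.snoc_castSucc]
  · rw [Fin.succ_last, bounds, Fin.snoc_last, Fin.snoc_castSucc]

/-- Adding a changepoint at `m` splits the loss. -/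
lemma cpLoss_snoc (x : ℕ → ℝ) (m n : ℕ) {k : ℕ} (τ : Fin k → ℕ) :
    cpLoss x n (Fin.snoc τ m) = cpLoss x m τ + segCost x (m + 1) n := by
  rw [cpLoss_eq, Fin.cons_snoc_eq_snoc_cons, Fin.snoc_last, cpLoss]
  rfl

lemma validCP_snoc {m n : ℕ} {k : ℕ} {τ : Fin k → ℕ} (hτ : validCP m τ)
    (hm : 1 ≤ m) (hmn : m < n) : validCP n (Fin.snoc τ m) := by
  constructor
  · intro i j hij
    rcases Fin.eq_castSucc_or_eq_last j with ⟨j', rfl⟩ | rfl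
    · rcases Fin.eq_castSucc_or_eq_last i with ⟨i', rfl⟩ | rfl
      · rw [Fin.snoc_castSucc, Fin.snoc_castSucc]
        exact hτ.1 (Fin.castSucc_lt_castSucc_iff.mp hij)
      · exfalso; have := hij; simp [Fin.lt_iff_val_lt_val] at this; omega
    · rcases Fin.eq_castSucc_or_eq_last i with ⟨i', rfl⟩ | rfl
      · rw [Fin.snoc_castSucc, Fin.snoc_last]; exact (hτ.2 i').2
      · exact absurd hij (lt_irrefl _)
  · intro i
    rcases Fin.eq_castSucc_or_eq_last i with ⟨i', rfl⟩ | rfl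
    · rw [Fin.snoc_castSucc]; exact ⟨(hτ.2 i').1, lt_trans (hτ.2 i').2 hmn⟩
    · rw [Fin.snoc_last]; exact ⟨hm, hmn⟩

lemma cpLoss_nonneg (x : ℕ → ℝ) (n : ℕ) {k : ℕ} (τ : Fin k → ℕ) : 0 ≤ cpLoss x n τ :=
  Finset.sum_nonneg fun _ _ => segCost_nonneg _ _ _

/-- Lemma 3 (penalized case, pruning with margin `β`): for `m < n`, if
`L_m(z, τ) − β > L^opt_m(z)` for all `z`, then `L^opt_n(z) < L_n(z, τ)` for all `z`,
i.e. `τ` is never an optimizer of the penalized loss on the length-`n` problem. -/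
theorem pen_prune_margin (a b : ℕ → ℝ) (β : ℝ) (hβ : 0 < β) (k m n : ℕ)
    (τ : Fin k → ℕ) (hmn : m < n) (hτ : validCP m τ)
    (hsub : ∀ z : ℝ,
      optPenLoss (paramSeq a b z) β m < penLoss (paramSeq a b z) β m τ - β) :
    ∀ z : ℝ, optPenLoss (paramSeq a b z) β n < penLoss (paramSeq a b z) β n τ := by
  intro z
  set x := paramSeq a b z with hxdef
  have hx0 := hsub z
  have hpen_nonneg : ∀ (N k' : ℕ) (σ : Fin k' → ℕ), 0 ≤ penLoss x β N σ := by
    intro N k' σ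
    have h1 := cpLoss_nonneg x N σ
    have h2 : (0:ℝ) ≤ β * k' := by positivity
    rw [penLoss]; linarith
  have hne : ∀ N : ℕ,
      ({r : ℝ | ∃ (k' : ℕ) (σ : Fin k' → ℕ), validCP N σ ∧ r = penLoss x β N σ}).Nonempty := by
    intro N
    exact ⟨penLoss x β N Fin.elim0, 0, Fin.elim0, ⟨fun i => i.elim0, fun i => i.elim0⟩, rfl⟩
  have hbdd : ∀ N : ℕ,
      BddBelow {r : ℝ | ∃ (k' : ℕ) (σ : Fin k' → ℕ), validCP N σ ∧ r = penLoss x β N σ} := by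
    intro N
    exact ⟨0, fun r ⟨k', σ, _, hr⟩ => hr ▸ hpen_nonneg N k' σ⟩
  rcases Nat.eq_zero_or_pos m with rfl | hm
  · exfalso
    cases k with
    | zero =>
      have hL0 : cpLoss x 0 τ = 0 := by
        have h0 : (Fin.cons 0 τ : Fin 1 → ℕ) (Fin.last 0) = 0 := rfl
        rw [cpLoss_eq, h0, segCost, Finset.Icc_eq_empty (by omega)]
        simp
      have hopt : (0:ℝ) ≤ optPenLoss x β 0 := by
        rw [optPenLoss]
        exact le_csInf (hne 0) fun r ⟨k', σ, _, hr⟩ => hr ▸ hpen_nonneg 0 k' σ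
      rw [penLoss, hL0] at hx0
      simp at hx0
      linarith
    | succ j =>
      have := (hτ.2 0).2
      omega
  · obtain ⟨r, hrmem, hr⟩ := exists_lt_of_csInf_lt (hne m) hx0
    obtain ⟨k', σ, hσ, rfl⟩ := hrmem
    have hsval : validCP n (Fin.snoc σ m) := validCP_snoc hσ hm hmn
    have h1 : optPenLoss x β n ≤ penLoss x β n (Fin.snoc σ m) := by
      rw [optPenLoss]
      exact csInf_le (hbdd n) ⟨k' + 1, Fin.snoc σ m, hsval, rfl⟩
    have h2 : penLoss x β n (Fin.snoc σ m) = penLoss x β m σ + segCost x (m + 1) n + β := by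
      rw [penLoss, penLoss, cpLoss_snoc]
      push_cast
      ring
    have hs : (Fin.cons 0 τ : Fin (k+1) → ℕ) (Fin.last k) ≤ m := by
      cases k with
      | zero => simp
      | succ j =>
        rw [← Fin.succ_last, Fin.cons_succ]
        exact (hτ.2 _).2.le
    have h3 : cpLoss x m τ + segCost x (m + 1) n ≤ cpLoss x n τ := by
      rw [cpLoss_eq x m τ, cpLoss_eq x n τ]
      have := segCost_split x ((Fin.cons 0 τ : Fin (k+1) → ℕ) (Fin.last k)) m n hs hmn.le
      linarith
    rw [← hxdef] at hr
    simp only [penLoss] at hr h1 h2 ⊢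
    push_cast at hr h1 h2 ⊢
    linarith
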